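/- arXiv:1009.0424 — 2 statements merged into one kernel-verified Lean document; each statement's English description precedes it below -/
import Mathlib

section
/- Let $\alpha > 0$ and $\Psi_1, \Psi_2 \in L^\infty(\Omega)$ with $\Psi_i \ge \alpha$ a.e., where $\Omega \subseteq \mathbb{R}^3$ has finite measure. Let $w \in L^p(\Omega)^3$ satisfy $|w| \le \Psi_1$ a.e., and set $\eta = \alpha/(\alpha + \|\Psi_1 - \Psi_2\|_{L^\infty})$. Then $\widehat w := \eta\, w$ satisfies $|\widehat w| \le \Psi_2$ a.e. and $\|w - \widehat w\|_{L^p(\Omega)} \le \frac{1}{\alpha}\|w\|_{L^p(\Omega)}\,\|\Psi_1 - \Psi_2\|_{L^\infty(\Omega)}$. -/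
open MeasureTheory
open scoped ENNReal NNReal

/-- Quantitative projection lemma (Lemma 4.2): a field `w` with `|w| ≤ Ψ₁` is
approximated in `L^p` by `ŵ = η w` with `|ŵ| ≤ Ψ₂`, at distance controlled by
`‖Ψ₁ - Ψ₂‖_{L^∞}`, where `η = α/(α + ‖Ψ₁ - Ψ₂‖_{L^∞})`. -/
theorem projection_lemma {Ω : Type*} [MeasurableSpace Ω] (μ : Measure Ω) [IsFiniteMeasure μ]
    (α p : ℝ) (hα : 0 < α) (hp : 1 ≤ p)
    (Ψ₁ Ψ₂ : Ω → ℝ) (hΨ₁m : Measurable Ψ₁) (hΨ₂m : Measurable Ψ₂)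
    (hΨ₁b : MemLp Ψ₁ ⊤ μ) (hΨ₂b : MemLp Ψ₂ ⊤ μ)
    (hΨ₁ : ∀ᵐ x ∂μ, α ≤ Ψ₁ x) (hΨ₂ : ∀ᵐ x ∂μ, α ≤ Ψ₂ x)
    (w : Ω → EuclideanSpace ℝ (Fin 3)) (hwp : MemLp w (ENNReal.ofReal p) μ)
    (hw : ∀ᵐ x ∂μ, ‖w x‖ ≤ Ψ₁ x) :
    (∀ᵐ x ∂μ,
      ‖(α / (α + (eLpNorm (Ψ₁ - Ψ₂) ⊤ μ).toReal)) • w x‖ ≤ Ψ₂ x) ∧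
    (eLpNorm (fun x => w x - (α / (α + (eLpNorm (Ψ₁ - Ψ₂) ⊤ μ).toReal)) • w x)
        (ENNReal.ofReal p) μ).toReal ≤
      (1 / α) * (eLpNorm w (ENNReal.ofReal p) μ).toReal *
        (eLpNorm (Ψ₁ - Ψ₂) ⊤ μ).toReal := by
  set D : ℝ := (eLpNorm (Ψ₁ - Ψ₂) ⊤ μ).toReal with hDdef
  have hD : 0 ≤ D := ENNReal.toReal_nonneg
  have haD : 0 < α + D := by linarith
  have hη0 : 0 ≤ α / (α + D) := by positivity
  -- The L^∞ norm of Ψ₁ - Ψ₂ is finite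
  have hfin : eLpNorm (Ψ₁ - Ψ₂) ⊤ μ < ⊤ := (hΨ₁b.sub hΨ₂b).2
  -- a.e. bound |Ψ₁ x - Ψ₂ x| ≤ D
  have hbd : ∀ᵐ x ∂μ, |Ψ₁ x - Ψ₂ x| ≤ D := by
    have h := enorm_ae_le_eLpNormEssSup (Ψ₁ - Ψ₂) μ
    filter_upwards [h] with x hx
    have : ‖(Ψ₁ - Ψ₂) x‖ₑ ≤ eLpNorm (Ψ₁ - Ψ₂) ⊤ μ := by
      simpa [eLpNorm_exponent_top] using hx
    have := ENNReal.toReal_mono hfin.ne this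
    simpa [Real.norm_eq_abs, hDdef] using this
  constructor
  · filter_upwards [hw, hΨ₂, hbd] with x h1 h2 h3
    have hΨle : Ψ₁ x ≤ Ψ₂ x + D := by
      have := abs_le.mp h3
      linarith [this.1, this.2]
    have hnw : 0 ≤ ‖w x‖ := norm_nonneg _
    rw [norm_smul, Real.norm_eq_abs, abs_of_nonneg hη0]
    calc α / (α + D) * ‖w x‖ ≤ α / (α + D) * (Ψ₂ x + D) := by
          apply mul_le_mul_of_nonneg_left (by linarith) hη0
      _ ≤ Ψ₂ x := by
          rw [div_mul_eq_mul_div, div_le_iff₀ haD]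
          nlinarith
  · have heq : (fun x => w x - (α / (α + D)) • w x)
        = (1 - α / (α + D)) • w := by
      funext x
      simp [sub_smul, one_smul, Pi.smul_apply]
    rw [heq, eLpNorm_const_smul]
    have hwfin : eLpNorm w (ENNReal.ofReal p) μ < ⊤ := hwp.2
    have h1η : 0 ≤ 1 - α / (α + D) := by
      rw [sub_nonneg, div_le_one haD]; linarith
    rw [ENNReal.toReal_mul, toReal_enorm, Real.norm_eq_abs,
      abs_of_nonneg h1η]
    have hN : 0 ≤ (eLpNorm w (ENNReal.ofReal p) μ).toReal := ENNReal.toReal_nonneg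
    have key : 1 - α / (α + D) ≤ (1 / α) * D := by
      have h1 : 1 - α / (α + D) = D / (α + D) := by field_simp; ring
      rw [h1, one_div, div_le_iff₀ haD]
      nlinarith [mul_inv_cancel₀ hα.ne',
        mul_nonneg (mul_nonneg (inv_nonneg.mpr hα.le) hD) hD]
    calc (1 - α / (α + D)) * (eLpNorm w (ENNReal.ofReal p) μ).toReal
        ≤ (1 / α) * D * (eLpNorm w (ENNReal.ofReal p) μ).toReal :=
          mul_le_mul_of_nonneg_right key hN
      _ = 1 / α * (eLpNorm w (ENNReal.ofReal p) μ).toReal * D := by ring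
end

section
/- Under the hypotheses of the previous penalization setup, if additionally $\nu : Q \to [a_*, a^*]$ with $a_* > 0$, $\Psi \ge \alpha > 0$, and $\int_Q \nu\, k_\varepsilon(|u|^p - \Psi^p)|u|^p \le M$, then $\int_Q k_\varepsilon(|u|^p - \Psi^p) \le \frac{M}{a_* \alpha^p} + \frac{1}{\alpha^p}\int_Q \Psi^p$. -/
open MeasureTheory

/-- Uniform `L¹` bound on the penalization term (Lemma 4.3):
if `∫ ν k_ε(|u|^p - Ψ^p)|u|^p ≤ M` then
`∫ k_ε(|u|^p - Ψ^p) ≤ M/(a_* α^p) + (1/α^p) ∫ Ψ^p`. -/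
theorem penalization_L1_bound {Q : Type*} [MeasurableSpace Q] (μ : Measure Q)
    [IsFiniteMeasure μ]
    (ε p α astar asup M : ℝ) (hε : ε ∈ Set.Ioo (0 : ℝ) 1) (hp : 1 < p) (hα : 0 < α)
    (ha : 0 < astar) (haa : astar ≤ asup)
    (k : ℝ → ℝ) (hkc : Continuous k) (hkm : Monotone k) (hkpos : ∀ s, 0 < k s)
    (hk1 : ∀ s ≤ (0 : ℝ), k s = 1)
    (u : Q → EuclideanSpace ℝ (Fin 3)) (Ψ ν : Q → ℝ)
    (hΨ : ∀ x, α ≤ Ψ x) (hν : ∀ x, astar ≤ ν x ∧ ν x ≤ asup)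
    (hI1 : Integrable (fun x => k (‖u x‖ ^ p - Ψ x ^ p)) μ)
    (hI2 : Integrable (fun x => Ψ x ^ p) μ)
    (hI3 : Integrable (fun x => ν x * (k (‖u x‖ ^ p - Ψ x ^ p) * ‖u x‖ ^ p)) μ)
    (hM : ∫ x, ν x * (k (‖u x‖ ^ p - Ψ x ^ p) * ‖u x‖ ^ p) ∂μ ≤ M) :
    ∫ x, k (‖u x‖ ^ p - Ψ x ^ p) ∂μ ≤
      M / (astar * α ^ p) + (1 / α ^ p) * ∫ x, Ψ x ^ p ∂μ := by
  have hαp : (0:ℝ) < α ^ p := Real.rpow_pos_of_pos hα p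
  have key : ∀ x, k (‖u x‖ ^ p - Ψ x ^ p) ≤
      (astar * α ^ p)⁻¹ * (ν x * (k (‖u x‖ ^ p - Ψ x ^ p) * ‖u x‖ ^ p)) +
        (α ^ p)⁻¹ * Ψ x ^ p := by
    intro x
    set t := ‖u x‖ ^ p - Ψ x ^ p with ht
    have hK : 0 < k t := hkpos t
    have hup : (0:ℝ) ≤ ‖u x‖ ^ p := Real.rpow_nonneg (norm_nonneg _) p
    have hΨα : α ^ p ≤ Ψ x ^ p :=
      Real.rpow_le_rpow hα.le (hΨ x) (by linarith)
    have hνx := (hν x).1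
    -- k t * (Ψ^p - |u|^p) ≤ Ψ^p
    have hstep : k t * (Ψ x ^ p - ‖u x‖ ^ p) ≤ Ψ x ^ p := by
      rcases le_or_gt (‖u x‖ ^ p) (Ψ x ^ p) with h | h
      · have : k t = 1 := hk1 t (by rw [ht]; linarith)
        rw [this]; linarith
      · have h1 : k t * (Ψ x ^ p - ‖u x‖ ^ p) ≤ 0 :=
          mul_nonpos_of_nonneg_of_nonpos hK.le (by linarith)
        have : (0:ℝ) < Ψ x ^ p := lt_of_lt_of_le hαp hΨα
        linarith
    -- k t * α^p ≤ (ν/astar) k |u|^p + Ψ^p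
    have hmain : astar * (k t * α ^ p) ≤ ν x * (k t * ‖u x‖ ^ p) + astar * Ψ x ^ p := by
      nlinarith [mul_le_mul_of_nonneg_left hΨα hK.le,
        mul_le_mul_of_nonneg_right hνx (mul_nonneg hK.le hup)]
    have hpos : (0:ℝ) < astar * α ^ p := mul_pos ha hαp
    calc k t = (astar * α ^ p)⁻¹ * (astar * (k t * α ^ p)) := by
          field_simp
      _ ≤ (astar * α ^ p)⁻¹ * (ν x * (k t * ‖u x‖ ^ p) + astar * Ψ x ^ p) :=
          mul_le_mul_of_nonneg_left hmain (inv_nonneg.mpr hpos.le)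
      _ = (astar * α ^ p)⁻¹ * (ν x * (k t * ‖u x‖ ^ p)) + (α ^ p)⁻¹ * Ψ x ^ p := by
          field_simp
  have hInt : Integrable (fun x =>
      (astar * α ^ p)⁻¹ * (ν x * (k (‖u x‖ ^ p - Ψ x ^ p) * ‖u x‖ ^ p)) +
        (α ^ p)⁻¹ * Ψ x ^ p) μ :=
    (hI3.const_mul _).add (hI2.const_mul _)
  calc ∫ x, k (‖u x‖ ^ p - Ψ x ^ p) ∂μ
      ≤ ∫ x, ((astar * α ^ p)⁻¹ * (ν x * (k (‖u x‖ ^ p - Ψ x ^ p) * ‖u x‖ ^ p)) +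
          (α ^ p)⁻¹ * Ψ x ^ p) ∂μ := integral_mono hI1 hInt key
    _ = (astar * α ^ p)⁻¹ * (∫ x, ν x * (k (‖u x‖ ^ p - Ψ x ^ p) * ‖u x‖ ^ p) ∂μ) +
          (α ^ p)⁻¹ * ∫ x, Ψ x ^ p ∂μ := by
        rw [integral_add (hI3.const_mul _) (hI2.const_mul _),
          integral_const_mul, integral_const_mul]
    _ ≤ M / (astar * α ^ p) + (1 / α ^ p) * ∫ x, Ψ x ^ p ∂μ := by
        have hpos : (0:ℝ) < astar * α ^ p := mul_pos ha hαp
        have h1 : (astar * α ^ p)⁻¹ * (∫ x, ν x * (k (‖u x‖ ^ p - Ψ x ^ p) * ‖u x‖ ^ p) ∂μ)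
            ≤ (astar * α ^ p)⁻¹ * M :=
          mul_le_mul_of_nonneg_left hM (inv_nonneg.mpr hpos.le)
        rw [div_eq_inv_mul, one_div]
        linarith
end
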